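/- Let x be a solution trajectory of (DIN-AVD)_{α,β,b} with α ≥ 1. Suppose the growth conditions (G2): b(t) > β'(t) + β(t)/t for all t ≥ t₀, and (G3): t·w'(t) ≤ (α−3)·w(t) for all t ≥ t₀ hold, where w(t) := b(t) − β'(t) − β(t)/t. Then ∫_{t₀}^{∞} t·((α−3)w(t) − t·w'(t))·(f(x(t)) − min_H f) dt < +∞. -/

import Mathlib

open Real Set MeasureTheory

local notation "⟪" x ", " y "⟫" => @inner ℝ _ _ x y

lemma grad_convex_ineq {H : Type*} [NormedAddCommGroup H] [InnerProductSpace ℝ H]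
    [CompleteSpace H] (f : H → ℝ) (hconv : ConvexOn ℝ Set.univ f)
    (hfd : Differentiable ℝ f) (p y : H) :
    f p + ⟪gradient f p, y - p⟫ ≤ f y := by
  set φ : ℝ → ℝ := fun s => f (p + s • (y - p)) with hφdef
  have hA : ConvexOn ℝ Set.univ φ := by
    have h := hconv.comp_affineMap (AffineMap.lineMap p y : ℝ →ᵃ[ℝ] H)
    have heq : (f ∘ (AffineMap.lineMap p y : ℝ →ᵃ[ℝ] H)) = φ := by
      funext s
      simp [φ, AffineMap.lineMap_apply, add_comm]
    simpa [heq] using h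
  have hline : HasDerivAt (fun s : ℝ => p + s • (y - p)) (y - p) 0 := by
    simpa using ((hasDerivAt_id (0:ℝ)).smul_const (y - p)).const_add p
  have hgrad : HasGradientAt f (gradient f p) (p + (0:ℝ) • (y - p)) := by
    simpa using (hfd p).hasGradientAt
  have hφ' : HasDerivAt φ ⟪gradient f p, y - p⟫ 0 := by
    have h := (hgrad.hasFDerivAt.comp_hasDerivAt 0 hline)
    rw [InnerProductSpace.toDual_apply_apply] at h
    exact h
  have hslope := hA.le_slope_of_hasDerivAt (Set.mem_univ (0:ℝ)) (Set.mem_univ (1:ℝ))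
    one_pos hφ'
  have h0 : φ 0 = f p := by simp [φ]
  have h1 : φ 1 = f y := by simp [φ]
  rw [slope_def_field] at hslope
  simp [h0, h1] at hslope
  have hgi : ⟪gradient f p, y - p⟫ = (fderiv ℝ f p) y - (fderiv ℝ f p) p := by simp
  linarith

lemma gradient_contDiff' {H : Type*} [NormedAddCommGroup H] [InnerProductSpace ℝ H]
    [CompleteSpace H] (f : H → ℝ) (hf : ContDiff ℝ 2 f) :
    ContDiff ℝ 1 (gradient f) := by
  have h1 : ContDiff ℝ 1 (fderiv ℝ f) := hf.fderiv_right (by norm_num)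
  let e : StrongDual ℝ H ≃ₗᵢ[ℝ] H :=
    { toFun := ⇑(InnerProductSpace.toDual ℝ H).symm
      invFun := ⇑(InnerProductSpace.toDual ℝ H)
      left_inv := fun v => (InnerProductSpace.toDual ℝ H).apply_symm_apply v
      right_inv := fun v => (InnerProductSpace.toDual ℝ H).symm_apply_apply v
      map_add' := fun u v => map_add _ u v
      map_smul' := fun c v => by simp
      norm_map' := fun v => (InnerProductSpace.toDual ℝ H).symm.norm_map v }
  exact (e.contDiff (n := 1)).comp h1

/-- Theorem 2.1 (iii): integrability of the values for (DIN-AVD)_{α,β,b}. -/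
theorem dinavd_values_integrability
    {H : Type*} [NormedAddCommGroup H] [InnerProductSpace ℝ H] [CompleteSpace H]
    (f : H → ℝ) (hf : ContDiff ℝ 2 f) (hconv : ConvexOn ℝ Set.univ f)
    (xstar : H) (hmin : ∀ y, f xstar ≤ f y)
    (t₀ : ℝ) (ht₀ : 0 < t₀)
    (α : ℝ) (hα : 1 ≤ α)
    (β b β' b' w w' : ℝ → ℝ)
    (hβnn : ∀ t ≥ t₀, 0 ≤ β t) (hbnn : ∀ t ≥ t₀, 0 ≤ b t)
    (hβ' : ∀ t ≥ t₀, HasDerivAt β (β' t) t)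
    (hb' : ∀ t ≥ t₀, HasDerivAt b (b' t) t)
    (hw : ∀ t ≥ t₀, w t = b t - β' t - β t / t)
    (hw' : ∀ t ≥ t₀, HasDerivAt w (w' t) t)
    (x x' x'' : ℝ → H)
    (hx' : ∀ t ≥ t₀, HasDerivAt x (x' t) t)
    (hx'' : ∀ t ≥ t₀, HasDerivAt x' (x'' t) t)
    (hx''cont : ContinuousOn x'' (Set.Ici t₀))
    (hode : ∀ t ≥ t₀,
      x'' t + (α / t) • x' t + β t • (fderiv ℝ (gradient f) (x t)) (x' t)
        + b t • gradient f (x t) = 0)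
    (hG2 : ∀ t ≥ t₀, β' t + β t / t < b t)
    (hG3 : ∀ t ≥ t₀, t * w' t ≤ (α - 3) * w t) :
    IntegrableOn
      (fun t => t * ((α - 3) * w t - t * w' t) * (f (x t) - f xstar))
      (Set.Ici t₀) := by
  have hfd : Differentiable ℝ f := hf.differentiable two_ne_zero
  set G : H → H := gradient f with hGdef
  have hGc : ContDiff ℝ 1 G := gradient_contDiff' f hf
  have hGdiff : Differentiable ℝ G := hGc.differentiable one_ne_zero
  -- pointwise derivative of f ∘ x
  have hfx' : ∀ t ≥ t₀, HasDerivAt (fun s => f (x s)) ⟪G (x t), x' t⟫ t := by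
    intro t ht
    have hg : HasGradientAt f (G (x t)) (x t) := (hfd (x t)).hasGradientAt
    have h := hg.hasFDerivAt.comp_hasDerivAt t (hx' t ht)
    rw [InnerProductSpace.toDual_apply_apply] at h
    exact h
  -- pointwise derivative of G ∘ x
  have hGx' : ∀ t ≥ t₀, HasDerivAt (fun s => G (x s))
      ((fderiv ℝ G (x t)) (x' t)) t := by
    intro t ht
    exact ((hGdiff (x t)).hasFDerivAt).comp_hasDerivAt t (hx' t ht)
  set u : ℝ → H := fun t => (α - 1) • (x t - xstar) + t • (x' t + β t • G (x t)) with hudef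
  -- derivative of u
  have hu' : ∀ t ≥ t₀, HasDerivAt u ((-(t * w t)) • G (x t)) t := by
    intro t ht
    have htne : t ≠ 0 := (lt_of_lt_of_le ht₀ ht).ne'
    have d1 : HasDerivAt (fun s => (α - 1) • (x s - xstar)) ((α - 1) • x' t) t :=
      ((hx' t ht).sub_const xstar).const_smul (α - 1)
    have d2 : HasDerivAt (fun s => β s • G (x s))
        (β t • ((fderiv ℝ G (x t)) (x' t)) + β' t • G (x t)) t :=
      (hβ' t ht).smul (hGx' t ht)
    have d3 : HasDerivAt (fun s => x' s + β s • G (x s))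
        (x'' t + (β t • ((fderiv ℝ G (x t)) (x' t)) + β' t • G (x t))) t :=
      (hx'' t ht).add d2
    have d4 : HasDerivAt (fun s => s • (x' s + β s • G (x s)))
        (t • (x'' t + (β t • ((fderiv ℝ G (x t)) (x' t)) + β' t • G (x t)))
          + (1:ℝ) • (x' t + β t • G (x t))) t :=
      (hasDerivAt_id t).smul d3
    have hcomb := d1.add d4
    have hxe : x'' t = -((α / t) • x' t + β t • (fderiv ℝ G (x t)) (x' t)
        + b t • G (x t)) := by
      have h0 := hode t ht
      rw [eq_neg_iff_add_eq_zero]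
      rw [show x'' t + ((α / t) • x' t + β t • (fderiv ℝ G (x t)) (x' t) + b t • G (x t))
          = x'' t + (α / t) • x' t + β t • (fderiv ℝ G (x t)) (x' t) + b t • G (x t) from by
        abel]
      exact h0
    have heq : (α - 1) • x' t
        + (t • (x'' t + (β t • ((fderiv ℝ G (x t)) (x' t)) + β' t • G (x t)))
          + (1:ℝ) • (x' t + β t • G (x t)))
        = (-(t * w t)) • G (x t) := by
      rw [hxe, hw t ht]
      match_scalars <;> (field_simp [htne]; try ring)
    exact heq ▸ hcomb
  set E : ℝ → ℝ := fun t => t^2 * w t * (f (x t) - f xstar) + (1/2) * ⟪u t, u t⟫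
    with hEdef
  set D : ℝ → ℝ := fun t => (2*t*w t + t^2*w' t) * (f (x t) - f xstar)
      + (t^2*w t) * ⟪G (x t), x' t⟫ - (t*w t) * ⟪G (x t), u t⟫ with hDdef
  have hE' : ∀ t ≥ t₀, HasDerivAt E (D t) t := by
    intro t ht
    have p1 : HasDerivAt (fun s => s^2 * w s * (f (x s) - f xstar))
        (((↑(2:ℕ) * t ^ (2-1)) * w t + t^2 * w' t) * (f (x t) - f xstar)
          + (t^2 * w t) * ⟪G (x t), x' t⟫) t :=
      ((hasDerivAt_pow 2 t).mul (hw' t ht)).mul ((hfx' t ht).sub_const (f xstar))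
    have p2 : HasDerivAt (fun s => (1/2 : ℝ) * ⟪u s, u s⟫)
        ((1/2 : ℝ) * (⟪u t, (-(t * w t)) • G (x t)⟫ + ⟪(-(t * w t)) • G (x t), u t⟫)) t :=
      (HasDerivAt.inner ℝ (hu' t ht) (hu' t ht)).const_mul (1/2)
    have hcomb := p1.add p2
    have heq : (((↑(2:ℕ) * t ^ (2-1)) * w t + t^2 * w' t) * (f (x t) - f xstar)
          + (t^2 * w t) * ⟪G (x t), x' t⟫)
        + (1/2 : ℝ) * (⟪u t, (-(t * w t)) • G (x t)⟫ + ⟪(-(t * w t)) • G (x t), u t⟫)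
        = D t := by
      simp only [real_inner_smul_right, real_inner_smul_left,
        real_inner_comm (u t) (G (x t)), hDdef]
      push_cast
      ring
    exact heq ▸ hcomb
  -- positivity facts
  have hwnn : ∀ t ≥ t₀, 0 ≤ w t := by
    intro t ht
    have h2 := hG2 t ht
    rw [hw t ht]; linarith
  have hfge : ∀ t : ℝ, 0 ≤ f (x t) - f xstar := fun t => sub_nonneg.2 (hmin (x t))
  have hconvi : ∀ t : ℝ, f (x t) - f xstar ≤ ⟪G (x t), x t - xstar⟫ := by
    intro t
    have h := grad_convex_ineq f hconv hfd (x t) xstar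
    rw [← hGdef] at h
    have hfl : ⟪G (x t), xstar - x t⟫ = -⟪G (x t), x t - xstar⟫ := by
      rw [← inner_neg_right, neg_sub]
    rw [hfl] at h
    linarith
  set Φ : ℝ → ℝ := fun t => t * ((α - 3) * w t - t * w' t) * (f (x t) - f xstar) with hΦdef
  have hΦnn : ∀ t ≥ t₀, 0 ≤ Φ t := by
    intro t ht
    have ht' : 0 < t := lt_of_lt_of_le ht₀ ht
    exact mul_nonneg (mul_nonneg ht'.le (by linarith [hG3 t ht])) (hfge t)
  have hkey : ∀ t ≥ t₀, Φ t ≤ -D t := by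
    intro t ht
    have ht' : 0 < t := lt_of_lt_of_le ht₀ ht
    have hin : ⟪G (x t), u t⟫ = (α - 1) * ⟪G (x t), x t - xstar⟫
        + t * (⟪G (x t), x' t⟫ + β t * ⟪G (x t), G (x t)⟫) := by
      simp only [hudef, inner_add_right, real_inner_smul_right]
    have h1 : 0 ≤ ((α - 1) * (t * w t)) * (⟪G (x t), x t - xstar⟫ - (f (x t) - f xstar)) :=
      mul_nonneg (mul_nonneg (by linarith) (mul_nonneg ht'.le (hwnn t ht)))
        (sub_nonneg.2 (hconvi t))
    have h2 : 0 ≤ ((t^2 * w t) * β t) * ⟪G (x t), G (x t)⟫ :=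
      mul_nonneg (mul_nonneg (mul_nonneg (sq_nonneg t) (hwnn t ht)) (hβnn t ht))
        real_inner_self_nonneg
    have hiden : -D t - Φ t
        = ((α - 1) * (t * w t)) * (⟪G (x t), x t - xstar⟫ - (f (x t) - f xstar))
          + ((t^2 * w t) * β t) * ⟪G (x t), G (x t)⟫ := by
      simp only [hDdef, hΦdef, hin]; ring
    linarith
  have hEcont : ContinuousOn E (Ici t₀) :=
    fun t ht => (hE' t ht).continuousAt.continuousWithinAt
  have hEnn : ∀ t ≥ t₀, 0 ≤ E t := by
    intro t ht
    have h1 : 0 ≤ t^2 * w t * (f (x t) - f xstar) :=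
      mul_nonneg (mul_nonneg (sq_nonneg t) (hwnn t ht)) (hfge t)
    have h2 : (0:ℝ) ≤ ⟪u t, u t⟫ := real_inner_self_nonneg
    simp only [hEdef]
    linarith
  have hwcont : ContinuousOn w (Ici t₀) :=
    fun t ht => (hw' t ht).continuousAt.continuousWithinAt
  have hfxcont : ContinuousOn (fun s => f (x s)) (Ici t₀) :=
    fun t ht => (hfx' t ht).continuousAt.continuousWithinAt
  -- per-horizon integrability and uniform bound
  have key : ∀ T, t₀ ≤ T → IntegrableOn Φ (Ioc t₀ T) ∧ ∫ s in t₀..T, ‖Φ s‖ ≤ E t₀ := by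
    intro T hT
    have hIci : Icc t₀ T ⊆ Ici t₀ := Icc_subset_Ici_self
    have hne : ∀ s ∈ Ioo t₀ T, HasDerivAt (fun r => -E r) (-D s) s :=
      fun s hs => (hE' s hs.1.le).neg
    have hnegDpos : ∀ s ∈ Ioo t₀ T, 0 ≤ -D s :=
      fun s hs => le_trans (hΦnn s hs.1.le) (hkey s hs.1.le)
    have hDint : IntegrableOn (fun s => -D s) (Ioc t₀ T) :=
      intervalIntegral.integrableOn_deriv_of_nonneg ((hEcont.mono hIci).neg) hne hnegDpos
    have hIoc : Ioc t₀ T ⊆ Ici t₀ := Ioc_subset_Icc_self.trans hIci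
    have m1 : AEStronglyMeasurable w (volume.restrict (Ioc t₀ T)) :=
      (hwcont.mono hIoc).aestronglyMeasurable measurableSet_Ioc
    have m2 : AEStronglyMeasurable w' (volume.restrict (Ioc t₀ T)) := by
      refine (measurable_deriv w).aestronglyMeasurable.congr ?_
      filter_upwards [ae_restrict_mem measurableSet_Ioc] with s hs
      exact (hw' s hs.1.le).deriv
    have m3 : AEStronglyMeasurable (fun s => f (x s)) (volume.restrict (Ioc t₀ T)) :=
      (hfxcont.mono hIoc).aestronglyMeasurable measurableSet_Ioc
    have mΦ : AEStronglyMeasurable Φ (volume.restrict (Ioc t₀ T)) := by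
      simp only [hΦdef]
      exact ((aestronglyMeasurable_id.mul ((aestronglyMeasurable_const.mul m1).sub
        (aestronglyMeasurable_id.mul m2))).mul (m3.sub aestronglyMeasurable_const))
    have hΦint : IntegrableOn Φ (Ioc t₀ T) := by
      refine Integrable.mono' hDint mΦ ?_
      filter_upwards [ae_restrict_mem measurableSet_Ioc] with s hs
      rw [Real.norm_of_nonneg (hΦnn s hs.1.le)]
      exact hkey s hs.1.le
    refine ⟨hΦint, ?_⟩
    have hDii : IntervalIntegrable (fun s => -D s) volume t₀ T :=
      (intervalIntegrable_iff_integrableOn_Ioc_of_le hT).2 hDint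
    have hΦii : IntervalIntegrable (fun s => ‖Φ s‖) volume t₀ T :=
      (intervalIntegrable_iff_integrableOn_Ioc_of_le hT).2 hΦint.norm
    have hFTC : ∫ s in t₀..T, -D s = -E T - -E t₀ :=
      intervalIntegral.integral_eq_sub_of_hasDerivAt
        (fun s hs => by
          rw [uIcc_of_le hT] at hs
          exact (hE' s hs.1).neg) hDii
    have hmono : ∫ s in t₀..T, ‖Φ s‖ ≤ ∫ s in t₀..T, -D s := by
      refine intervalIntegral.integral_mono_on hT hΦii hDii ?_
      intro s hs
      rw [Real.norm_of_nonneg (hΦnn s hs.1)]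
      exact hkey s hs.1
    have := hEnn T hT
    calc ∫ s in t₀..T, ‖Φ s‖ ≤ -E T - -E t₀ := by rw [← hFTC]; exact hmono
      _ ≤ E t₀ := by linarith
  rw [integrableOn_Ici_iff_integrableOn_Ioi]
  refine integrableOn_Ioi_of_intervalIntegral_norm_bounded (E t₀) t₀
    (b := fun n : ℕ => t₀ + n) (fun n => (key (t₀ + n) (le_add_of_nonneg_right n.cast_nonneg)).1)
    (Filter.tendsto_atTop_add_const_left _ t₀ tendsto_natCast_atTop_atTop)
    (Filter.Eventually.of_forall fun n => (key (t₀ + n) (le_add_of_nonneg_right n.cast_nonneg)).2)
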